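/- For every integer k with 0 ≤ k ≤ r, the number of maximal closed root subsystems of Φ of rank r − k equals S(r + 1, k + 1). (These counts are the Betti numbers of the wonderful compactification of a Cartan subalgebra of 𝔰𝔩_{r+1}.) -/

import Mathlib

open scoped Classical
noncomputable section

/-- `Ψ` is a closed root subsystem of `Θ`. -/
def IsClosedSub {E : Type*} [AddCommGroup E] (Θ Ψ : Set E) : Prop :=
  Ψ ⊆ Θ ∧ (∀ l ∈ Ψ, -l ∈ Ψ) ∧ ∀ l ∈ Ψ, ∀ m ∈ Ψ, l + m ∈ Θ → l + m ∈ Ψ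

/-- The rank of a subset: the dimension of its `ℚ`-linear span. -/
def rankOf {E : Type*} [AddCommGroup E] [Module ℚ E] (Ψ : Set E) : ℕ :=
  Module.finrank ℚ (Submodule.span ℚ Ψ)

/-- `Ψ` is a maximal closed root subsystem of `Θ` of rank `m`. -/
def IsMaxClosedOfRank {E : Type*} [AddCommGroup E] [Module ℚ E] (Θ Ψ : Set E) (m : ℕ) : Prop :=
  IsClosedSub Θ Ψ ∧ rankOf Ψ = m ∧
    ∀ Ψ' : Set E, IsClosedSub Θ Ψ' → rankOf Ψ' = m → Ψ ⊆ Ψ' → Ψ' = Ψ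

/-- The root system of type `A_r`: the vectors `e_i − e_j`, `i ≠ j`, in `ℚ^{r+1}`. -/
def typeA (r : ℕ) : Set (Fin (r + 1) → ℚ) :=
  {v | ∃ i j : Fin (r + 1), i ≠ j ∧ v = Pi.single i 1 - Pi.single j 1}

/-- The Stirling number of the second kind `S(n, k)`: the number of partitions of an
`n`-element set into exactly `k` nonempty blocks. -/
def stirling2 (n k : ℕ) : ℕ :=
  Nat.card {P : Finpartition (Finset.univ : Finset (Fin n)) // P.parts.card = k}


open Finset

namespace St15



variable {n : ℕ}

/-- basis vector -/
def ee (i : Fin n) : Fin n → ℚ := Pi.single i 1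

lemma ee_apply (i x : Fin n) : ee i x = if x = i then 1 else 0 := by
  simp [ee, Pi.single_apply]

def PhiSet (n : ℕ) : Set (Fin n → ℚ) :=
  {v | ∃ i j : Fin n, i ≠ j ∧ v = ee i - ee j}

lemma ee_sub_ne_zero {i j : Fin n} (hij : i ≠ j) : ee i - ee j ≠ 0 := by
  intro h
  have := congrFun h i
  simp [ee_apply, hij] at this

lemma ee_sub_inj {i j k l : Fin n} (hij : i ≠ j) (hkl : k ≠ l)
    (h : ee i - ee j = ee k - ee l) : i = k ∧ j = l := by
  have hi := congrFun h i
  have hj := congrFun h j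
  simp only [Pi.sub_apply, ee_apply] at hi hj
  rw [if_neg hij] at hi
  rw [if_neg (Ne.symm hij)] at hj
  norm_num at hi hj
  constructor
  · by_contra hik
    rw [if_neg hik] at hi
    split_ifs at hi <;> norm_num at hi
  · by_contra hjl
    rw [if_neg hjl] at hj
    split_ifs at hj <;> norm_num at hj


variable (P : Finpartition (univ : Finset (Fin n)))

def psiOf : Set (Fin n → ℚ) :=
  {v | ∃ i j : Fin n, i ≠ j ∧ P.part i = P.part j ∧ v = ee i - ee j}

lemma psiOf_subset : psiOf P ⊆ PhiSet n := by
  rintro v ⟨i, j, hij, -, rfl⟩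
  exact ⟨i, j, hij, rfl⟩

lemma part_trans {i j k : Fin n} (h1 : P.part i = P.part j) (h2 : P.part j = P.part k) :
    P.part i = P.part k := h1.trans h2

lemma psiOf_closed : IsClosedSub (PhiSet n) (psiOf P) := by
  refine ⟨psiOf_subset P, ?_, ?_⟩
  · rintro v ⟨i, j, hij, hp, rfl⟩
    exact ⟨j, i, hij.symm, hp.symm, by abel⟩
  · rintro v ⟨i, j, hij, hpij, rfl⟩ w ⟨k, l, hkl, hpkl, rfl⟩ ⟨a, b, hab, hsum⟩
    by_cases hil : i = l
    · subst hil
      have hkj : k ≠ j := by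
        rintro rfl
        apply ee_sub_ne_zero hab
        rw [← hsum]; abel
      exact ⟨k, j, hkj, hpkl.trans hpij, by abel⟩
    · have hjk : j = k := by
        by_contra hjk
        have hj := congrFun hsum j
        have hl := congrFun hsum l
        simp only [Pi.sub_apply, Pi.add_apply, ee_apply] at hj hl
        rw [if_neg (Ne.symm hij), if_neg hjk] at hj
        rw [if_neg (fun h : l = i => hil h.symm), if_neg (Ne.symm hkl)] at hl
        norm_num at hj hl
        by_cases hjl : j = l
        · rw [if_pos hjl] at hj
          split_ifs at hj <;> norm_num at hj
        · rw [if_neg hjl] at hj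
          rw [if_neg (fun h : l = j => hjl h.symm)] at hl
          norm_num at hj hl
          have hjb : j = b := by
            by_contra hjb
            rw [if_neg hjb] at hj
            split_ifs at hj <;> norm_num at hj
          have hlb : l = b := by
            by_contra hlb
            rw [if_neg hlb] at hl
            split_ifs at hl <;> norm_num at hl
          exact hjl (hjb.trans hlb.symm)
      subst hjk
      exact ⟨i, l, hil, hpij.trans hpkl, by abel⟩


lemma ee_sub_mem_psiOf_iff {i j : Fin n} (hij : i ≠ j) :
    ee i - ee j ∈ psiOf P ↔ P.part i = P.part j := by
  constructor
  · rintro ⟨k, l, hkl, hp, h⟩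
    obtain ⟨rfl, rfl⟩ := ee_sub_inj hij hkl h
    exact hp
  · intro hp
    exact ⟨i, j, hij, hp, rfl⟩

/-- the part of `a` is the set of elements with the same part. -/
lemma part_eq_filter (a : Fin n) :
    P.part a = univ.filter (fun b => P.part b = P.part a) := by
  ext b
  rw [mem_filter]
  simp only [mem_univ, true_and]
  exact P.mem_part_iff_part_eq_part (mem_univ b) (mem_univ a)

lemma eq_of_part_rel_eq {Q : Finpartition (univ : Finset (Fin n))}
    (h : ∀ i j : Fin n, P.part i = P.part j ↔ Q.part i = Q.part j) : P = Q := by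
  have hpart : ∀ a : Fin n, P.part a = Q.part a := by
    intro a
    rw [part_eq_filter P a, part_eq_filter Q a]
    exact Finset.filter_congr (fun b _ => by simpa using h b a)
  have himage : ∀ (R : Finpartition (univ : Finset (Fin n))),
      R.parts = univ.image R.part := by
    intro R
    ext t
    simp only [mem_image, mem_univ, true_and]
    constructor
    · intro ht
      obtain ⟨a, ha⟩ := R.nonempty_of_mem_parts ht
      exact ⟨a, R.part_eq_of_mem ht ha⟩
    · rintro ⟨a, rfl⟩
      exact R.part_mem.2 (mem_univ a)
  ext1
  rw [himage P, himage Q]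
  exact Finset.image_congr (fun a _ => hpart a)

lemma psiOf_injective : Function.Injective (psiOf (n := n)) := by
  intro P Q h
  apply eq_of_part_rel_eq
  intro i j
  by_cases hij : i = j
  · subst hij; simp
  · rw [← ee_sub_mem_psiOf_iff P hij, ← ee_sub_mem_psiOf_iff Q hij, h]

/-- Every closed subsystem comes from a partition. -/
lemma exists_partition {Ψ : Set (Fin n → ℚ)} (h : IsClosedSub (PhiSet n) Ψ) :
    ∃ P : Finpartition (univ : Finset (Fin n)), Ψ = psiOf P := by
  obtain ⟨hsub, hneg, hclosed⟩ := h
  have hsym : ∀ {i j : Fin n}, (i = j ∨ ee i - ee j ∈ Ψ) → (j = i ∨ ee j - ee i ∈ Ψ) := by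
    rintro i j (rfl | hm)
    · exact Or.inl rfl
    · refine Or.inr ?_
      have := hneg _ hm
      rwa [neg_sub] at this
  have htr : ∀ {i j k : Fin n}, (i = j ∨ ee i - ee j ∈ Ψ) → (j = k ∨ ee j - ee k ∈ Ψ) →
      (i = k ∨ ee i - ee k ∈ Ψ) := by
    rintro i j k (rfl | hm1) h2
    · exact h2
    · rcases h2 with rfl | hm2
      · exact Or.inr hm1
      · by_cases hik : i = k
        · exact Or.inl hik
        · refine Or.inr ?_
          have := hclosed _ hm1 _ hm2 ⟨i, k, hik, by abel⟩
          have heq : ee i - ee j + (ee j - ee k) = ee i - ee k := by abel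
          rwa [heq] at this
  set R : Setoid (Fin n) :=
    ⟨fun i j => i = j ∨ ee i - ee j ∈ Ψ, ⟨fun i => Or.inl rfl, hsym, htr⟩⟩ with hRdef
  refine ⟨Finpartition.ofSetoid R, ?_⟩
  have hrel : ∀ i j : Fin n, R.r i j ↔
      (Finpartition.ofSetoid R).part i = (Finpartition.ofSetoid R).part j := by
    intro i j
    rw [← Finpartition.mem_part_ofSetoid_iff_rel,
      (Finpartition.ofSetoid R).mem_part_iff_part_eq_part (mem_univ j) (mem_univ i)]
    exact eq_comm
  ext v
  constructor
  · intro hv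
    obtain ⟨i, j, hij, rfl⟩ := hsub hv
    exact ⟨i, j, hij, (hrel i j).1 (Or.inr hv), rfl⟩
  · rintro ⟨i, j, hij, hp, rfl⟩
    rcases (hrel i j).2 hp with rfl | hm
    · exact absurd rfl hij
    · exact hm


/-- block-sum linear map -/
def Tmap : (Fin n → ℚ) →ₗ[ℚ] ({t // t ∈ P.parts} → ℚ) where
  toFun v := fun B => ∑ x ∈ B.1, v x
  map_add' u v := by funext B; simp [Finset.sum_add_distrib]
  map_smul' c v := by funext B; simp [Finset.mul_sum]

lemma sum_ee {t : Finset (Fin n)} (i : Fin n) :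
    ∑ x ∈ t, ee i x = if i ∈ t then 1 else 0 := by
  simp only [ee_apply]
  rw [Finset.sum_ite_eq' t i (fun _ => (1 : ℚ))]

lemma mem_iff_of_part_eq {i j : Fin n} (hp : P.part i = P.part j)
    {t : Finset (Fin n)} (ht : t ∈ P.parts) : i ∈ t ↔ j ∈ t := by
  constructor
  · intro hi
    have : P.part i = t := P.part_eq_of_mem ht hi
    rw [← hp.symm.trans this]
    exact P.mem_part (mem_univ j)
  · intro hj
    have : P.part j = t := P.part_eq_of_mem ht hj
    rw [← hp.trans this]
    exact P.mem_part (mem_univ i)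

/-- representative of the block of `i` -/
def repr (i : Fin n) : Fin n :=
  (P.part i).min' (P.nonempty_of_mem_parts (P.part_mem.2 (mem_univ i)))

lemma repr_mem (i : Fin n) : repr P i ∈ P.part i := Finset.min'_mem _ _

lemma part_repr (i : Fin n) : P.part (repr P i) = P.part i :=
  P.part_eq_of_mem (P.part_mem.2 (mem_univ i)) (repr_mem P i)

lemma span_psiOf : Submodule.span ℚ (psiOf P) = LinearMap.ker (Tmap P) := by
  apply le_antisymm
  · rw [Submodule.span_le]
    rintro v ⟨i, j, hij, hp, rfl⟩
    simp only [SetLike.mem_coe, LinearMap.mem_ker]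
    funext B
    show ∑ x ∈ B.1, (ee i - ee j) x = 0
    simp only [Pi.sub_apply, Finset.sum_sub_distrib, sum_ee]
    rw [if_congr (mem_iff_of_part_eq P hp B.2) rfl rfl, sub_self]
  · intro v hv
    rw [LinearMap.mem_ker] at hv
    have hzero : ∑ i : Fin n, v i • ee (repr P i) = 0 := by
      rw [show (univ : Finset (Fin n)) = P.parts.biUnion id from P.biUnion_parts.symm,
        Finset.sum_biUnion P.supIndep.pairwiseDisjoint]
      refine Finset.sum_eq_zero fun t ht => ?_
      obtain ⟨a, ha⟩ := P.nonempty_of_mem_parts ht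
      have hrep : ∀ i ∈ t, repr P i = repr P a := by
        intro i hi
        have hpa : P.part i = P.part a :=
          (P.part_eq_of_mem ht hi).trans (P.part_eq_of_mem ht ha).symm
        simp only [repr, hpa]
      calc ∑ i ∈ (id t : Finset (Fin n)), v i • ee (repr P i)
          = ∑ i ∈ t, v i • ee (repr P a) :=
            Finset.sum_congr rfl (fun i hi => by rw [hrep i hi])
        _ = (∑ i ∈ t, v i) • ee (repr P a) := (Finset.sum_smul).symm
        _ = 0 := by
            have := congrFun hv ⟨t, ht⟩
            simp only [Tmap, LinearMap.coe_mk, AddHom.coe_mk, Pi.zero_apply] at this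
            rw [show ∑ i ∈ t, v i = 0 from this, zero_smul]
    have h1 : ∑ i : Fin n, v i • ee i = v := by
      funext x
      rw [Finset.sum_apply]
      simp only [Pi.smul_apply, ee_apply, smul_eq_mul, mul_ite, mul_one, mul_zero]
      rw [Finset.sum_ite_eq univ x v, if_pos (mem_univ x)]
    have hexp : ∑ i : Fin n, v i • (ee i - ee (repr P i)) = v := by
      calc ∑ i : Fin n, v i • (ee i - ee (repr P i))
          = ∑ i : Fin n, (v i • ee i - v i • ee (repr P i)) := by
            refine Finset.sum_congr rfl fun i _ => smul_sub _ _ _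
        _ = (∑ i : Fin n, v i • ee i) - ∑ i : Fin n, v i • ee (repr P i) :=
            Finset.sum_sub_distrib _ _
        _ = v := by rw [h1, hzero, sub_zero]
    rw [← hexp]
    refine Submodule.sum_mem _ fun i _ => ?_
    by_cases h : i = repr P i
    · rw [← h, sub_self, smul_zero]
      exact Submodule.zero_mem _
    · exact Submodule.smul_mem _ _
        (Submodule.subset_span ⟨i, repr P i, h, (part_repr P i).symm, rfl⟩)

lemma Tmap_surjective : Function.Surjective (Tmap P) := by
  intro f
  refine ⟨fun x => f ⟨P.part x, P.part_mem.2 (mem_univ x)⟩ / ((P.part x).card : ℚ), ?_⟩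
  funext B
  obtain ⟨t, ht⟩ := B
  show ∑ x ∈ t, _ = f ⟨t, ht⟩
  have hne : t.Nonempty := P.nonempty_of_mem_parts ht
  have hcard : ((t.card : ℚ)) ≠ 0 := by
    exact_mod_cast hne.card_pos.ne'
  have hcongr : ∀ x ∈ t,
      f ⟨P.part x, P.part_mem.2 (mem_univ x)⟩ / ((P.part x).card : ℚ)
        = f ⟨t, ht⟩ / (t.card : ℚ) := by
    intro x hx
    have hp : P.part x = t := P.part_eq_of_mem ht hx
    rw [show (⟨P.part x, P.part_mem.2 (mem_univ x)⟩ : {u // u ∈ P.parts}) = ⟨t, ht⟩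
      from Subtype.ext hp, hp]
  rw [Finset.sum_congr rfl hcongr, Finset.sum_const, nsmul_eq_mul]
  field_simp

lemma rank_psiOf : rankOf (psiOf P) + P.parts.card = n := by
  have h := LinearMap.finrank_range_add_finrank_ker (Tmap P)
  rw [LinearMap.range_eq_top.mpr (Tmap_surjective P), finrank_top,
    Module.finrank_pi, Module.finrank_pi, Fintype.card_coe, Fintype.card_fin] at h
  rw [rankOf, span_psiOf]
  omega

lemma psiOf_eq_inter : psiOf P = PhiSet n ∩ ↑(Submodule.span ℚ (psiOf P)) := by
  apply Set.Subset.antisymm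
  · intro v hv
    exact ⟨psiOf_subset P hv, Submodule.subset_span hv⟩
  · rintro v ⟨⟨i, j, hij, rfl⟩, hv⟩
    rw [SetLike.mem_coe, span_psiOf, LinearMap.mem_ker] at hv
    have hB := congrFun hv ⟨P.part i, P.part_mem.2 (mem_univ i)⟩
    have hsum : ∑ x ∈ P.part i, (ee i - ee j) x = 0 := hB
    simp only [Pi.sub_apply, Finset.sum_sub_distrib, sum_ee] at hsum
    rw [if_pos (P.mem_part (mem_univ i))] at hsum
    have hj : j ∈ P.part i := by
      by_contra hj
      rw [if_neg hj] at hsum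
      norm_num at hsum
    exact ⟨i, j, hij,
      ((P.mem_part_iff_part_eq_part (mem_univ j) (mem_univ i)).1 hj).symm, rfl⟩

end St15

open Finset St15 in
theorem statement15 (r k : ℕ) (hr : 1 ≤ r) (hk : k ≤ r) :
    {Ψ : Set (Fin (r + 1) → ℚ) | IsMaxClosedOfRank (typeA r) Ψ (r - k)}.ncard
      = stirling2 (r + 1) (k + 1) := by
  have htA : typeA r = PhiSet (r + 1) := rfl
  have key : {Ψ : Set (Fin (r + 1) → ℚ) | IsMaxClosedOfRank (typeA r) Ψ (r - k)}
      = psiOf '' {P : Finpartition (univ : Finset (Fin (r + 1))) | P.parts.card = k + 1} := by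
    ext Ψ
    simp only [Set.mem_setOf_eq, Set.mem_image, IsMaxClosedOfRank, htA]
    constructor
    · rintro ⟨hcl, hrank, hmax⟩
      obtain ⟨P, rfl⟩ := exists_partition hcl
      have hrk := rank_psiOf P
      exact ⟨P, by omega, rfl⟩
    · rintro ⟨P, hP, rfl⟩
      have hrk := rank_psiOf P
      have hrank : rankOf (psiOf P) = r - k := by omega
      refine ⟨psiOf_closed P, hrank, ?_⟩
      intro Ψ' hcl' hrank' hsub
      obtain ⟨Q, rfl⟩ := exists_partition hcl'
      have hle : Submodule.span ℚ (psiOf P) ≤ Submodule.span ℚ (psiOf Q) :=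
        Submodule.span_mono hsub
      have heq : Submodule.span ℚ (psiOf P) = Submodule.span ℚ (psiOf Q) :=
        Submodule.eq_of_le_of_finrank_eq hle (hrank.trans hrank'.symm)
      rw [psiOf_eq_inter Q, ← heq, ← psiOf_eq_inter P]
  rw [key, Set.ncard_image_of_injective _ psiOf_injective, stirling2,
    ← Nat.card_coe_set_eq]
  exact Nat.card_congr (Equiv.subtypeEquivRight fun P => by simp)
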